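/- arXiv:2105.04426 — 3 statements merged into one kernel-verified Lean document; each statement's English description precedes it below -/
import Mathlib

section
/- Let V and W be graded vector spaces of finite type with V_0 and W_0 nonzero (i.e., dim V_0 ≥ 1 and dim W_0 ≥ 1). Then the log index of the graded tensor product V ⊗ W, where dim (V⊗W)_n = Σ_{i+j=n} (dim V_i)(dim W_j), equals the maximum of the log indices of V and W. -/
open Filter Set
open scoped ENNReal BigOperators

/-- The log index of a sequence of nonnegative reals (dimensions of a graded
vector space): `limsup_i (log a_i)/i`, with the convention `log 0 = -∞`,
computed in the extended reals. -/
noncomputable def logIndex (a : ℕ → ℝ) : EReal :=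
  Filter.limsup (fun i => ENNReal.log (ENNReal.ofReal (a i)) / ((i : ℝ) : EReal)) Filter.atTop

/-- The radius of convergence of `Σ a_i z^i`, via Cauchy–Hadamard:
`ρ = 1 / limsup a_i^{1/i}` in `ℝ≥0∞`. -/
noncomputable def radius (a : ℕ → ℝ) : ℝ≥0∞ :=
  1 / Filter.limsup (fun n => ENNReal.ofReal (a n ^ ((n : ℝ)⁻¹))) Filter.atTop

lemma logIndex_mono {a b : ℕ → ℝ} (h : ∀ n, a n ≤ b n) : logIndex a ≤ logIndex b := by
  refine Filter.limsup_le_limsup (Filter.Eventually.of_forall fun n => ?_)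
  exact EReal.div_le_div_right_of_nonneg (by exact_mod_cast Nat.cast_nonneg (α := ℝ) n)
    (ENNReal.log_monotone (ENNReal.ofReal_le_ofReal (h n)))

lemma growth_of_logIndex_lt {a : ℕ → ℝ} {c : ℝ} (h : logIndex a < (c : EReal)) :
    ∃ C : ℝ, 1 ≤ C ∧ ∀ n, a n ≤ C * Real.exp (c * n) := by
  have hev := Filter.eventually_lt_of_limsup_lt h
  rw [Filter.eventually_atTop] at hev
  obtain ⟨N, hN⟩ := hev
  set N' := max N 1 with hN'
  refine ⟨1 + ∑ k ∈ Finset.range N', |a k| / Real.exp (c * k), ?_, fun n => ?_⟩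
  · have : (0:ℝ) ≤ ∑ k ∈ Finset.range N', |a k| / Real.exp (c * k) :=
      Finset.sum_nonneg fun k _ => div_nonneg (abs_nonneg _) (Real.exp_pos _).le
    linarith
  rcases lt_or_ge n N' with hn | hn
  · have h1 : a n ≤ |a n| := le_abs_self _
    have h2 : |a n| / Real.exp (c * n) ≤ ∑ k ∈ Finset.range N', |a k| / Real.exp (c * k) :=
      Finset.single_le_sum (f := fun k => |a k| / Real.exp (c * k))
        (fun k _ => div_nonneg (abs_nonneg _) (Real.exp_pos _).le) (Finset.mem_range.2 hn)
    have h3 : |a n| = |a n| / Real.exp (c * n) * Real.exp (c * n) := by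
      field_simp
    nlinarith [Real.exp_pos (c * n), abs_nonneg (a n)]
  · have hn1 : 1 ≤ n := le_trans (le_max_right N 1) hn
    have hlt := hN n (le_trans (le_max_left N 1) hn)
    have hnpos : (0:EReal) < ((n : ℝ) : EReal) := by
      exact_mod_cast (by exact_mod_cast hn1 : (0:ℝ) < (n:ℝ))
    have hle : ENNReal.log (ENNReal.ofReal (a n)) ≤ (c : EReal) * ((n : ℝ) : EReal) := by
      rw [mul_comm]; exact (EReal.div_le_iff_le_mul hnpos (EReal.coe_ne_top _)).1 hlt.le
    have hrw : (c : EReal) * ((n : ℝ) : EReal) =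
        ENNReal.log (ENNReal.ofReal (Real.exp (c * n))) := by
      rw [ENNReal.log_ofReal_of_pos (Real.exp_pos _), Real.log_exp, EReal.coe_mul]
    rw [hrw, ENNReal.log_le_log_iff] at hle
    have := (ENNReal.ofReal_le_ofReal_iff (Real.exp_pos _).le).1 hle
    have hC : (0:ℝ) ≤ 1 + ∑ k ∈ Finset.range N', |a k| / Real.exp (c * k) := by
      have : (0:ℝ) ≤ ∑ k ∈ Finset.range N', |a k| / Real.exp (c * k) :=
        Finset.sum_nonneg fun k _ => div_nonneg (abs_nonneg _) (Real.exp_pos _).le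
      linarith
    nlinarith [Real.exp_pos (c * n),
      Finset.sum_nonneg (fun k (_ : k ∈ Finset.range N') =>
        div_nonneg (abs_nonneg (a k)) (Real.exp_pos (c * k)).le)]

lemma logIndex_le_of_growth {a : ℕ → ℝ} {c K : ℝ} (hK : 1 ≤ K)
    (h : ∀ n, a n ≤ K * (n + 1) * Real.exp (c * n)) : logIndex a ≤ (c : EReal) := by
  set h' : ℕ → ℝ := fun n => (Real.log K + Real.log (n + 1) + c * n) / n with hh
  have htend : Filter.Tendsto h' Filter.atTop (nhds c) := by
    have h1 : Filter.Tendsto (fun n : ℕ => Real.log K / n) Filter.atTop (nhds 0) :=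
      tendsto_const_div_atTop_nhds_zero_nat _
    have h2 : Filter.Tendsto (fun n : ℕ => Real.log (n + 1) / n) Filter.atTop (nhds 0) := by
      have hlo : Filter.Tendsto (fun x : ℝ => Real.log x / x) Filter.atTop (nhds 0) :=
        Real.isLittleO_log_id_atTop.tendsto_div_nhds_zero
      have hcomp : Filter.Tendsto (fun n : ℕ => Real.log ((n:ℝ) + 1) / ((n:ℝ) + 1))
          Filter.atTop (nhds 0) :=
        hlo.comp (tendsto_atTop_add_const_right _ 1 tendsto_natCast_atTop_atTop)
      have hq : Filter.Tendsto (fun n : ℕ => ((n:ℝ) + 1) / n) Filter.atTop (nhds 1) := by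
        have : Filter.Tendsto (fun n : ℕ => 1 / (n : ℝ)) Filter.atTop (nhds 0) := tendsto_one_div_atTop_nhds_zero_nat
        have h' := Filter.Tendsto.add tendsto_const_nhds this (f := fun _ : ℕ => (1:ℝ))
        simp only [add_zero] at h'
        apply h'.congr'
        filter_upwards [Filter.eventually_ge_atTop 1] with n hn
        have : (n:ℝ) ≠ 0 := by positivity
        field_simp
      have := hcomp.mul hq
      simp only [zero_mul] at this
      apply this.congr'
      filter_upwards [Filter.eventually_ge_atTop 1] with n hn
      have hne : (n:ℝ) ≠ 0 := by positivity
      have hne1 : (n:ℝ) + 1 ≠ 0 := by positivity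
      field_simp
    have h3 : Filter.Tendsto (fun n : ℕ => c * (n:ℝ) / n) Filter.atTop (nhds c) := by
      have : Filter.Tendsto (fun _ : ℕ => c) Filter.atTop (nhds c) := tendsto_const_nhds
      apply this.congr'
      filter_upwards [Filter.eventually_ge_atTop 1] with n hn
      have hne : (n:ℝ) ≠ 0 := by positivity
      field_simp
    have := (h1.add h2).add h3
    simp only [zero_add] at this
    apply this.congr (fun n => by rw [hh]; ring)
  have hlim : Filter.limsup (fun n : ℕ => ((h' n : ℝ) : EReal)) Filter.atTop = (c : EReal) :=
    (Filter.Tendsto.comp (continuous_coe_real_ereal.tendsto c) htend).limsup_eq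
  rw [logIndex, ← hlim]
  refine Filter.limsup_le_limsup ?_
  filter_upwards [Filter.eventually_ge_atTop 1] with n hn
  rcases le_or_gt (a n) 0 with ha | ha
  · have hpos : (0:EReal) < ((n:ℝ):EReal) := by
      exact_mod_cast (by exact_mod_cast hn : (0:ℝ) < (n:ℝ))
    rw [ENNReal.ofReal_eq_zero.2 ha, ENNReal.log_zero,
      EReal.bot_div_of_pos_ne_top hpos (EReal.coe_ne_top _)]
    exact bot_le
  · have hnpos : (0:ℝ) < n := by exact_mod_cast hn
    have hK0 : (0:ℝ) < K := lt_of_lt_of_le one_pos hK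
    have hb : (0:ℝ) < K * (n + 1) * Real.exp (c * n) := by positivity
    have hlog : Real.log (a n) ≤ Real.log K + Real.log (n + 1) + c * n := by
      have := Real.log_le_log ha (h n)
      rw [Real.log_mul (by positivity) (Real.exp_ne_zero _), Real.log_mul (by positivity)
        (by positivity), Real.log_exp] at this
      linarith
    rw [ENNReal.log_ofReal_of_pos ha, ← EReal.coe_div, hh]
    exact EReal.coe_le_coe_iff.2 ((div_le_div_iff_of_pos_right hnpos).2 hlog)

/-- If `V` and `W` are graded vector spaces of finite type with `V₀, W₀` nonzero,
then the log index of the graded tensor product, where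
`dim (V⊗W)_n = Σ_{i+j=n} (dim V_i)(dim W_j)`, equals the maximum of the log
indices of `V` and `W`. -/
theorem stmt4 (V W : ℕ → ℕ) (hV : 1 ≤ V 0) (hW : 1 ≤ W 0) :
    logIndex (fun n => ((∑ p ∈ Finset.HasAntidiagonal.antidiagonal n, V p.1 * W p.2 : ℕ) : ℝ)) =
      max (logIndex (fun i => (V i : ℝ))) (logIndex (fun i => (W i : ℝ))) := by
  apply le_antisymm
  · rw [← EReal.le_of_forall_lt_iff_le]
    intro b hb
    obtain ⟨C, hC1, hC⟩ := growth_of_logIndex_lt (lt_of_le_of_lt (le_max_left _ _) hb)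
    obtain ⟨D, hD1, hD⟩ := growth_of_logIndex_lt (lt_of_le_of_lt (le_max_right _ _) hb)
    apply logIndex_le_of_growth (K := C * D) (one_le_mul_of_one_le_of_one_le hC1 hD1)
    intro n
    have hcast : ((∑ p ∈ Finset.HasAntidiagonal.antidiagonal n, V p.1 * W p.2 : ℕ) : ℝ)
        = ∑ p ∈ Finset.HasAntidiagonal.antidiagonal n, (V p.1 : ℝ) * (W p.2 : ℝ) := by push_cast; rfl
    rw [hcast]
    have hbd : ∀ p ∈ Finset.HasAntidiagonal.antidiagonal n,
        (V p.1 : ℝ) * (W p.2 : ℝ) ≤ C * D * Real.exp (b * n) := by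
      intro p hp
      have hpn : p.1 + p.2 = n := Finset.HasAntidiagonal.mem_antidiagonal.1 hp
      have h1 := hC p.1
      have h2 := hD p.2
      have he : Real.exp (b * p.1) * Real.exp (b * p.2) = Real.exp (b * n) := by
        rw [← Real.exp_add, ← hpn]; push_cast; ring_nf
      calc (V p.1 : ℝ) * (W p.2 : ℝ)
          ≤ (C * Real.exp (b * p.1)) * (D * Real.exp (b * p.2)) :=
            mul_le_mul h1 h2 (Nat.cast_nonneg _)
              (mul_nonneg (by linarith) (Real.exp_pos _).le)
        _ = C * D * Real.exp (b * n) := by rw [← he]; ring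
    calc ∑ p ∈ Finset.HasAntidiagonal.antidiagonal n, (V p.1 : ℝ) * (W p.2 : ℝ)
        ≤ ∑ _p ∈ Finset.HasAntidiagonal.antidiagonal n, C * D * Real.exp (b * n) :=
          Finset.sum_le_sum hbd
      _ = (n + 1) * (C * D * Real.exp (b * n)) := by
          rw [Finset.sum_const, Finset.Nat.card_antidiagonal, nsmul_eq_mul]; push_cast; ring
      _ = C * D * (n + 1) * Real.exp (b * n) := by ring
  · apply max_le
    · apply logIndex_mono
      intro n
      have : V n * W 0 ≤ ∑ p ∈ Finset.HasAntidiagonal.antidiagonal n, V p.1 * W p.2 :=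
        Finset.single_le_sum (f := fun p : ℕ × ℕ => V p.1 * W p.2) 
          (fun p _ => Nat.zero_le _)
          (Finset.HasAntidiagonal.mem_antidiagonal.2 (show (n, 0).1 + (n, 0).2 = n from add_zero n))
      have h2 : V n ≤ V n * W 0 := Nat.le_mul_of_pos_right _ hW
      exact_mod_cast le_trans h2 this
    · apply logIndex_mono
      intro n
      have : V 0 * W n ≤ ∑ p ∈ Finset.HasAntidiagonal.antidiagonal n, V p.1 * W p.2 :=
        Finset.single_le_sum (f := fun p : ℕ × ℕ => V p.1 * W p.2) 
          (fun p _ => Nat.zero_le _)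
          (Finset.HasAntidiagonal.mem_antidiagonal.2 (show (0, n).1 + (0, n).2 = n from zero_add n))
      have h2 : W n ≤ V 0 * W n := Nat.le_mul_of_pos_left _ hV
      exact_mod_cast le_trans h2 this
end

section
/- Let f(z) = Σ_{i≥1} a_i z^i be a power series with nonnegative real coefficients and a_0 = 0, with radius of convergence ρ_f ∈ (0,∞), and suppose Σ_i a_i ρ_f^i = ∞. Let k ≥ 1 and define g to be the formal power series g(z) = 1/(1 − z^k f(z)) = Σ_{m≥0} (z^k f(z))^m (well-defined since z^k f(z) has zero constant term). Then the radius of convergence of g is strictly less than ρ_f. -/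
open Filter Set PowerSeries Finset
open scoped ENNReal BigOperators

lemma rootTest (b : ℕ → ℝ) (hb : ∀ n, 0 ≤ b n) (r : ℝ) (hr : 0 ≤ r)
    (h : ENNReal.ofReal r < radius b) : Summable (fun n => b n * r ^ n) := by
  rcases eq_or_lt_of_le hr with hr0 | hr0
  · apply summable_of_ne_finset_zero (s := {0})
    intro n hn
    simp only [Finset.mem_singleton] at hn
    rw [← hr0, zero_pow hn, mul_zero]
  -- r > 0
  unfold radius at h
  set L := Filter.limsup (fun n => ENNReal.ofReal (b n ^ ((n : ℝ)⁻¹))) Filter.atTop with hL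
  rw [one_div] at h
  rw [ENNReal.lt_inv_iff_lt_inv] at h
  have hlt : L < ENNReal.ofReal r⁻¹ := by
    rwa [ENNReal.ofReal_inv_of_pos hr0]
  obtain ⟨c, hc1, hc2⟩ := exists_between hlt
  have hcne : c ≠ ⊤ := (hc2.trans_le le_top).ne
  have hev : ∀ᶠ n in atTop, ENNReal.ofReal (b n ^ ((n : ℝ)⁻¹)) < c :=
    Filter.eventually_lt_of_limsup_lt hc1
  set t := c.toReal with ht
  have htr : t * r < 1 := by
    have h1 : t < r⁻¹ := by
      have := (ENNReal.toReal_lt_toReal hcne ENNReal.ofReal_ne_top).2 hc2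
      rwa [ENNReal.toReal_ofReal (by positivity)] at this
    calc t * r < r⁻¹ * r := by
          exact mul_lt_mul_of_pos_right h1 hr0
      _ = 1 := inv_mul_cancel₀ hr0.ne'
  have ht0 : 0 ≤ t := ENNReal.toReal_nonneg
  obtain ⟨N, hN⟩ := (hev.and (eventually_ge_atTop 1)).exists_forall_of_atTop
  rw [← summable_nat_add_iff N]
  have hgeo : Summable (fun n : ℕ => (t * r) ^ (n + N)) :=
    (summable_nat_add_iff N).2 (summable_geometric_of_lt_one (by positivity) htr)
  apply Summable.of_nonneg_of_le _ _ hgeo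
  · intro n
    have := hb (n + N)
    positivity
  · intro n
    obtain ⟨h1, h2⟩ := hN (n + N) (Nat.le_add_left N n)
    set m := n + N with hm
    have hmlt : b m ^ ((m : ℝ)⁻¹) < t :=
      (ENNReal.ofReal_lt_iff_lt_toReal (Real.rpow_nonneg (hb m) _) hcne).1 h1
    have hbm : b m ≤ t ^ m := by
      have heq : (b m ^ ((m : ℝ)⁻¹)) ^ (m : ℕ) = b m := by
        rw [← Real.rpow_natCast (b m ^ ((m : ℝ)⁻¹)) m, ← Real.rpow_mul (hb m),
          inv_mul_cancel₀ (by exact_mod_cast (by omega : m ≠ 0) : (m : ℝ) ≠ 0), Real.rpow_one]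
      calc b m = (b m ^ ((m : ℝ)⁻¹)) ^ (m : ℕ) := heq.symm
        _ ≤ t ^ m := pow_le_pow_left₀ (Real.rpow_nonneg (hb m) _) hmlt.le m
    calc b m * r ^ m ≤ t ^ m * r ^ m :=
          mul_le_mul_of_nonneg_right hbm (by positivity)
      _ = (t * r) ^ m := (mul_pow t r m).symm

lemma grec {a : ℕ → ℝ} {k : ℕ} (hk : 1 ≤ k) :
    ∀ n, PowerSeries.coeff n ((1 - X ^ k * PowerSeries.mk a)⁻¹) =
      (if n = 0 then 1 else 0) +
      ∑ p ∈ antidiagonal n, (PowerSeries.coeff p.1 (X ^ k * PowerSeries.mk a)) *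
        (PowerSeries.coeff p.2 ((1 - X ^ k * PowerSeries.mk a)⁻¹)) := by
  intro n
  have hunit : (1 - X ^ k * PowerSeries.mk a) * (1 - X ^ k * PowerSeries.mk a)⁻¹ = 1 := by
    apply PowerSeries.mul_inv_cancel
    simp [zero_pow (by omega : k ≠ 0)]
  have hid : (1 - X ^ k * PowerSeries.mk a)⁻¹ =
      1 + (X ^ k * PowerSeries.mk a) * (1 - X ^ k * PowerSeries.mk a)⁻¹ := by
    linear_combination hunit
  conv_lhs => rw [hid]
  rw [map_add, PowerSeries.coeff_one, PowerSeries.coeff_mul]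

/-- If `f(z) = Σ_{i≥1} a_i z^i` has nonnegative coefficients, zero constant term,
radius of convergence `ρ_f ∈ (0,∞)`, and `Σ a_i ρ_f^i = ∞`, then for `k ≥ 1` the
power series `g = 1/(1 - z^k f(z))` has radius of convergence strictly smaller
than `ρ_f`. -/
theorem stmt5 (a : ℕ → ℝ) (ha : ∀ i, 0 ≤ a i) (ha0 : a 0 = 0)
    (hρ0 : 0 < radius a) (hρtop : radius a < ⊤)
    (hdiv : ¬ Summable (fun i => a i * (radius a).toReal ^ i))
    (k : ℕ) (hk : 1 ≤ k) :
    radius (fun n =>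
        PowerSeries.coeff n ((1 - PowerSeries.X ^ k * PowerSeries.mk a)⁻¹)) <
      radius a := by
  set g : ℕ → ℝ := fun n =>
    PowerSeries.coeff n ((1 - PowerSeries.X ^ k * PowerSeries.mk a)⁻¹) with hgdef
  set h : ℕ → ℝ := fun i => PowerSeries.coeff i (X ^ k * PowerSeries.mk a) with hhdef
  have hh : ∀ i, h i = if k ≤ i then a (i - k) else 0 := by
    intro i
    simp only [hhdef]
    rw [mul_comm, coeff_mul_X_pow']
    simp
  have hh0 : ∀ i, 0 ≤ h i := by
    intro i; rw [hh]; split <;> [exact ha _; exact le_rfl]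
  have hrec : ∀ n, g n = (if n = 0 then 1 else 0) +
      ∑ p ∈ antidiagonal n, h p.1 * g p.2 := grec hk
  have hhk0 : h 0 = 0 := by rw [hh]; simp [Nat.not_le.2 (by omega : 0 < k)]
  have hg0 : g 0 = 1 := by
    rw [hrec 0]
    simp [Finset.Nat.antidiagonal_zero, hhk0]
  have hgnn : ∀ n, 0 ≤ g n := by
    intro n
    induction n using Nat.strong_induction_on with
    | _ n IH =>
      rw [hrec n]
      apply add_nonneg (by positivity)
      apply Finset.sum_nonneg
      intro p hp
      rcases Nat.eq_zero_or_pos p.1 with h1 | h1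
      · rw [h1, hhk0, zero_mul]
      · have hps : p.1 + p.2 = n := Finset.HasAntidiagonal.mem_antidiagonal.1 hp
        exact mul_nonneg (hh0 _) (IH p.2 (by omega))
  -- basic data about ρ
  set ρ := (radius a).toReal with hρdef
  have hρ : 0 < ρ := ENNReal.toReal_pos hρ0.ne' hρtop.ne
  have hρeq : ENNReal.ofReal ρ = radius a := ENNReal.ofReal_toReal hρtop.ne
  -- choose N with large partial sum
  have htend : Tendsto (fun n => ∑ i ∈ Finset.range n, a i * ρ ^ i) atTop atTop :=
    (not_summable_iff_tendsto_nat_atTop_of_nonneg (fun i => mul_nonneg (ha i) (by positivity))).1 hdiv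
  obtain ⟨N, hN⟩ := (htend.eventually_ge_atTop (3 / ρ ^ k)).exists
  -- choose θ and r
  set θ : ℝ := (2 : ℝ)⁻¹ ^ (((k + N : ℕ) : ℝ))⁻¹ with hθdef
  have hθ0 : 0 < θ := Real.rpow_pos_of_pos (by norm_num) _
  have hθ1 : θ < 1 := Real.rpow_lt_one (by norm_num) (by norm_num)
    (inv_pos.2 (by exact_mod_cast (by omega : 0 < k + N)))
  have hθpow : θ ^ (k + N) = 2⁻¹ := by
    rw [hθdef, ← Real.rpow_natCast (_ ^ _), ← Real.rpow_mul (by norm_num),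
      inv_mul_cancel₀ (by exact_mod_cast (by omega : k + N ≠ 0) : ((k + N : ℕ) : ℝ) ≠ 0),
      Real.rpow_one]
  set r : ℝ := θ * ρ with hrdef
  have hr : 0 < r := by positivity
  have hrρ : r < ρ := by
    calc r < 1 * ρ := by apply mul_lt_mul_of_pos_right hθ1 hρ
    _ = ρ := one_mul ρ
  -- q > 1
  set M := k + N with hMdef
  set q : ℝ := ∑ i ∈ Finset.range (M + 1), h i * r ^ i with hqdef
  have hq1 : 1 < q := by
    have step1 : ∑ d ∈ Finset.range N, h (k + d) * r ^ (k + d) ≤ q := by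
      rw [hqdef, ← Finset.sum_image (f := fun i => h i * r ^ i)
        (g := fun d => k + d) (by intro x _ y _ hxy; simpa using hxy)]
      apply Finset.sum_le_sum_of_subset_of_nonneg
      · intro i hi
        simp only [Finset.mem_image, Finset.mem_range] at hi ⊢
        obtain ⟨d, hd, rfl⟩ := hi
        omega
      · intro i _ _
        have := hh0 i
        positivity
    have step2 : ∀ d ∈ Finset.range N, θ ^ (k + N) * (a d * ρ ^ (k + d))
        ≤ h (k + d) * r ^ (k + d) := by
      intro d hd
      rw [hh (k + d), if_pos (by omega), Nat.add_sub_cancel_left, hrdef]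
      have h1 : θ ^ (k + N) ≤ θ ^ (k + d) := by
        apply pow_le_pow_of_le_one hθ0.le hθ1.le
        simp only [Finset.mem_range] at hd
        omega
      calc θ ^ (k + N) * (a d * ρ ^ (k + d)) ≤ θ ^ (k + d) * (a d * ρ ^ (k + d)) := by
            apply mul_le_mul_of_nonneg_right h1 (mul_nonneg (ha d) (by positivity))
        _ = a d * (θ ^ (k + d) * ρ ^ (k + d)) := by ring
        _ = a d * (θ * ρ) ^ (k + d) := by rw [mul_pow]

    have step3 : θ ^ (k + N) * (ρ ^ k * (3 / ρ ^ k)) ≤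
        ∑ d ∈ Finset.range N, θ ^ (k + N) * (a d * ρ ^ (k + d)) := by
      rw [← Finset.mul_sum]
      apply mul_le_mul_of_nonneg_left _ (by positivity)
      calc ρ ^ k * (3 / ρ ^ k) ≤ ρ ^ k * ∑ i ∈ Finset.range N, a i * ρ ^ i :=
            mul_le_mul_of_nonneg_left hN (by positivity)
        _ = ∑ d ∈ Finset.range N, a d * ρ ^ (k + d) := by
            rw [Finset.mul_sum]
            apply Finset.sum_congr rfl
            intro d _
            rw [pow_add]
            ring
    have hval : θ ^ (k + N) * (ρ ^ k * (3 / ρ ^ k)) = 3 / 2 := by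
      rw [hθpow, mul_div_cancel₀ _ (by positivity : (ρ:ℝ) ^ k ≠ 0)]
      norm_num
    have : (3:ℝ)/2 ≤ q := by
      rw [← hval]
      exact le_trans step3 (le_trans (Finset.sum_le_sum step2) step1)
    linarith
  -- partial sums
  set S : ℕ → ℝ := fun n => ∑ j ∈ Finset.range (n + 1), g j * r ^ j with hSdef
  have hstep : ∀ n, q * S n ≤ S (n + M) := by
    intro n
    set F : ℕ × ℕ → ℝ := fun p => (h p.1 * r ^ p.1) * (g p.2 * r ^ p.2) with hFdef
    have hFnn : ∀ p, 0 ≤ F p := fun p =>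
      mul_nonneg (mul_nonneg (hh0 _) (by positivity)) (mul_nonneg (hgnn _) (by positivity))
    have e1 : q * S n = ∑ p ∈ Finset.range (M + 1) ×ˢ Finset.range (n + 1), F p := by
      rw [hqdef, hSdef, Finset.sum_mul_sum, Finset.sum_product]
    have hdisj : (↑(Finset.range (n + M + 1)) : Set ℕ).PairwiseDisjoint antidiagonal := by
      intro x _ y _ hxy
      rw [Function.onFun, Finset.disjoint_left]
      intro p hpx hpy
      rw [Finset.HasAntidiagonal.mem_antidiagonal] at hpx hpy
      exact hxy (hpx ▸ hpy)
    have e2 : ∑ p ∈ (Finset.range (n + M + 1)).biUnion antidiagonal, F p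
        = ∑ j ∈ Finset.range (n + M + 1), ∑ p ∈ antidiagonal j, F p :=
      Finset.sum_biUnion hdisj
    have hsub : Finset.range (M + 1) ×ˢ Finset.range (n + 1) ⊆
        (Finset.range (n + M + 1)).biUnion antidiagonal := by
      intro p hp
      simp only [Finset.mem_product, Finset.mem_range] at hp
      exact Finset.mem_biUnion.2 ⟨p.1 + p.2, Finset.mem_range.2 (by omega),
        Finset.HasAntidiagonal.mem_antidiagonal.2 rfl⟩
    have e3 : ∀ j, ∑ p ∈ antidiagonal j, F p
        = (∑ p ∈ antidiagonal j, h p.1 * g p.2) * r ^ j := by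
      intro j
      rw [Finset.sum_mul]
      apply Finset.sum_congr rfl
      intro p hp
      have hpj := Finset.HasAntidiagonal.mem_antidiagonal.1 hp
      rw [hFdef, ← hpj, pow_add]
      ring
    calc q * S n = ∑ p ∈ Finset.range (M + 1) ×ˢ Finset.range (n + 1), F p := e1
      _ ≤ ∑ p ∈ (Finset.range (n + M + 1)).biUnion antidiagonal, F p :=
          Finset.sum_le_sum_of_subset_of_nonneg hsub (fun p _ _ => hFnn p)
      _ = ∑ j ∈ Finset.range (n + M + 1), ∑ p ∈ antidiagonal j, F p := e2
      _ = ∑ j ∈ Finset.range (n + M + 1), (∑ p ∈ antidiagonal j, h p.1 * g p.2) * r ^ j :=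
          Finset.sum_congr rfl (fun j _ => e3 j)
      _ ≤ ∑ j ∈ Finset.range (n + M + 1), g j * r ^ j := by
          apply Finset.sum_le_sum
          intro j _
          apply mul_le_mul_of_nonneg_right _ (by positivity)
          rw [hrec j]
          exact le_add_of_nonneg_left (by positivity)
      _ = S (n + M) := rfl
  have hSpow : ∀ m, q ^ m ≤ S (m * M) := by
    intro m
    induction m with
    | zero => simp [hSdef, hg0]
    | succ m IH =>
      calc q ^ (m + 1) = q * q ^ m := by ring
        _ ≤ q * S (m * M) := mul_le_mul_of_nonneg_left IH (by linarith)
        _ ≤ S (m * M + M) := hstep _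
        _ = S ((m + 1) * M) := by rw [Nat.succ_mul]
  have hnsum : ¬ Summable (fun n => g n * r ^ n) := by
    intro hsum
    have hb : ∀ m, q ^ m ≤ ∑' n, g n * r ^ n := fun m =>
      (hSpow m).trans (Summable.sum_le_tsum _ (fun i _ => mul_nonneg (hgnn i) (by positivity)) hsum)
    obtain ⟨m, hm⟩ := ((tendsto_pow_atTop_atTop_of_one_lt hq1).eventually_gt_atTop
      (∑' n, g n * r ^ n)).exists
    linarith [hb m]
  have hle : radius g ≤ ENNReal.ofReal r := by
    by_contra hcon
    push_neg at hcon
    exact hnsum (rootTest g hgnn r hr.le hcon)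
  calc radius g ≤ ENNReal.ofReal r := hle
    _ < ENNReal.ofReal ρ := by rw [ENNReal.ofReal_lt_ofReal_iff hρ]; exact hrρ
    _ = radius a := hρeq
end

section
/- Let f(z) = Σ a_n z^n and g(z) = Σ b_n z^n be power series with nonnegative real coefficients, each having at least one nonzero coefficient in positive degree, with radii of convergence ρ_f and ρ_g respectively. Then the radius of convergence of the product f·g equals min(ρ_f, ρ_g). -/
open Filter Set
open scoped ENNReal BigOperators
open scoped NNReal

/-- The `radius` above agrees with the radius of the corresponding formal
multilinear series over `ℝ`. -/
lemma radius_eq_ofScalars (a : ℕ → ℝ) (ha : ∀ n, 0 ≤ a n) :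
    radius a = (FormalMultilinearSeries.ofScalars ℝ a).radius := by
  rw [FormalMultilinearSeries.radius_eq_liminf, radius, one_div, ENNReal.inv_limsup]
  apply Filter.liminf_congr
  filter_upwards with n
  have h1 : ‖FormalMultilinearSeries.ofScalars ℝ a n‖ = a n := by
    rw [FormalMultilinearSeries.ofScalars_norm, Real.norm_of_nonneg (ha n)]
  have hnorm : ‖FormalMultilinearSeries.ofScalars ℝ a n‖₊ = (a n).toNNReal := by
    ext
    rw [coe_nnnorm, h1, Real.coe_toNNReal _ (ha n)]
  rw [hnorm, one_div, one_div, ENNReal.ofReal, Real.toNNReal_rpow_of_nonneg (ha n)]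

lemma le_radius_of_bound' (a : ℕ → ℝ) (ha : ∀ n, 0 ≤ a n) (C : ℝ) {r : ℝ≥0}
    (h : ∀ n, a n * (r : ℝ) ^ n ≤ C) : (r : ℝ≥0∞) ≤ radius a := by
  rw [radius_eq_ofScalars a ha]
  refine FormalMultilinearSeries.le_radius_of_bound _ C fun n => ?_
  rw [FormalMultilinearSeries.ofScalars_norm, Real.norm_of_nonneg (ha n)]
  exact h n

lemma exists_bound_of_lt_radius (a : ℕ → ℝ) (ha : ∀ n, 0 ≤ a n) {r : ℝ≥0}
    (h : (r : ℝ≥0∞) < radius a) :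
    ∃ t ∈ Ioo (0 : ℝ) 1, ∃ C > 0, ∀ n, a n * (r : ℝ) ^ n ≤ C * t ^ n := by
  rw [radius_eq_ofScalars a ha] at h
  obtain ⟨t, ht, C, hC, hb⟩ :=
    FormalMultilinearSeries.norm_mul_pow_le_mul_pow_of_lt_radius _ h
  refine ⟨t, ht, C, hC, fun n => ?_⟩
  have := hb n
  rw [FormalMultilinearSeries.ofScalars_norm, Real.norm_of_nonneg (ha n)] at this
  exact this

lemma summable_of_lt_radius (a : ℕ → ℝ) (ha : ∀ n, 0 ≤ a n) {r : ℝ≥0}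
    (h : (r : ℝ≥0∞) < radius a) : Summable fun n => a n * (r : ℝ) ^ n := by
  obtain ⟨t, ht, C, hC, hb⟩ := exists_bound_of_lt_radius a ha h
  exact Summable.of_nonneg_of_le
    (fun n => mul_nonneg (ha n) (pow_nonneg r.coe_nonneg n)) hb
    ((summable_geometric_of_lt_one ht.1.le ht.2).mul_left C)

/-- If `f` and `g` are power series with nonnegative coefficients, each having a
nonzero coefficient in positive degree, then the radius of convergence of the
product `f·g` equals `min(ρ_f, ρ_g)`. -/
theorem stmt11 (a b : ℕ → ℝ) (ha : ∀ n, 0 ≤ a n) (hb : ∀ n, 0 ≤ b n)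
    (hane : ∃ n, 1 ≤ n ∧ a n ≠ 0) (hbne : ∃ n, 1 ≤ n ∧ b n ≠ 0) :
    radius (fun n => ∑ p ∈ Finset.HasAntidiagonal.antidiagonal n, a p.1 * b p.2) =
      min (radius a) (radius b) := by
  set c : ℕ → ℝ := fun n => ∑ p ∈ Finset.HasAntidiagonal.antidiagonal n, a p.1 * b p.2 with hc_def
  have hc : ∀ n, 0 ≤ c n := fun n =>
    Finset.sum_nonneg fun p _ => mul_nonneg (ha p.1) (hb p.2)
  have hsingle : ∀ (i j : ℕ), a i * b j ≤ c (i + j) := by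
    intro i j
    exact Finset.single_le_sum (f := fun p : ℕ × ℕ => a p.1 * b p.2)
      (fun p _ => mul_nonneg (ha p.1) (hb p.2))
      (show ((i, j) : ℕ × ℕ) ∈ Finset.HasAntidiagonal.antidiagonal (i + j) from Finset.HasAntidiagonal.mem_antidiagonal.mpr rfl)
  -- generic: if `b k ≠ 0` for some `k`, then `radius c ≤ radius a`, and symmetrically
  have key : ∀ (u v : ℕ → ℝ), (∀ n, 0 ≤ u n) → (∀ n, 0 ≤ v n) →
      (∀ i j, u i * v j ≤ c (i + j)) → (∃ k, v k ≠ 0) → radius c ≤ radius u := by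
    intro u v hu hv huv ⟨k, hvk⟩
    have hvk' : 0 < v k := lt_of_le_of_ne (hv k) (Ne.symm hvk)
    refine ENNReal.le_of_forall_nnreal_lt fun r hr => ?_
    rcases eq_or_ne r 0 with rfl | hr0
    · simp
    have rpos : (0 : ℝ) < (r : ℝ) := by positivity
    obtain ⟨t, ht, C, hC, hbc⟩ := exists_bound_of_lt_radius c hc hr
    have hd : 0 < v k * (r : ℝ) ^ k := mul_pos hvk' (pow_pos rpos k)
    refine le_radius_of_bound' u hu (C / (v k * (r : ℝ) ^ k)) fun n => ?_
    rw [le_div_iff₀ hd]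
    calc u n * (r : ℝ) ^ n * (v k * (r : ℝ) ^ k)
        = (u n * v k) * (r : ℝ) ^ (n + k) := by rw [pow_add]; ring
      _ ≤ c (n + k) * (r : ℝ) ^ (n + k) :=
          mul_le_mul_of_nonneg_right (huv n k) (pow_nonneg rpos.le _)
      _ ≤ C * t ^ (n + k) := hbc (n + k)
      _ ≤ C * 1 := mul_le_mul_of_nonneg_left
          (pow_le_one₀ ht.1.le ht.2.le) hC.le
      _ = C := mul_one C
  obtain ⟨m, -, ham⟩ := hane
  obtain ⟨k, -, hbk⟩ := hbne
  refine le_antisymm (le_min (key a b ha hb hsingle ⟨k, hbk⟩)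
    (key b a hb ha (fun i j => by rw [add_comm]; exact (mul_comm (b i) (a j)) ▸ hsingle j i)
      ⟨m, ham⟩)) ?_
  -- min ≤ radius c
  refine ENNReal.le_of_forall_nnreal_lt fun r hr => ?_
  rw [lt_min_iff] at hr
  have hsa := summable_of_lt_radius a ha hr.1
  have hsb := summable_of_lt_radius b hb hr.2
  have hna : Summable fun n => ‖a n * (r : ℝ) ^ n‖ := by
    refine hsa.congr fun n => ?_
    rw [Real.norm_of_nonneg (mul_nonneg (ha n) (pow_nonneg r.coe_nonneg n))]
  have hnb : Summable fun n => ‖b n * (r : ℝ) ^ n‖ := by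
    refine hsb.congr fun n => ?_
    rw [Real.norm_of_nonneg (mul_nonneg (hb n) (pow_nonneg r.coe_nonneg n))]
  have hsum := (summable_norm_sum_mul_antidiagonal_of_summable_norm hna hnb).of_norm
  have hre : (fun n => ∑ kl ∈ Finset.HasAntidiagonal.antidiagonal n,
      (a kl.1 * (r : ℝ) ^ kl.1) * (b kl.2 * (r : ℝ) ^ kl.2)) =
      fun n => c n * (r : ℝ) ^ n := by
    funext n
    rw [hc_def, Finset.sum_mul]
    refine Finset.sum_congr rfl fun p hp => ?_
    rw [← Finset.HasAntidiagonal.mem_antidiagonal.mp hp, pow_add]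
    ring
  rw [hre] at hsum
  refine le_radius_of_bound' c hc (∑' n, c n * (r : ℝ) ^ n) fun n => ?_
  exact Summable.le_tsum hsum n fun j _ =>
    mul_nonneg (hc j) (pow_nonneg r.coe_nonneg j)
end
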